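/- Let ι be a finite index set, a : ι → ℝ^n with |ι| = m, b : ι → ℝ, and P = {x ∈ ℝ^n : x ≥ 0 componentwise and ∀ i ∈ ι, ⟪a_i, x⟫ ≥ b_i}. If x is an extreme point of P, then the number of nonzero coordinates of x is at most m. -/

import Mathlib

/-- **Support bound at extreme points of `{x ≥ 0, ⟪a i, x⟫ ≥ b i}`.** If `x` is an extreme
point of `P = {x : ℝⁿ | x ≥ 0 componentwise, ∀ i, ⟪a i, x⟫ ≥ b i}` with `|ι| = m`
inequality constraints, then `x` has at most `m` nonzero coordinates. -/
theorem extremePoint_support_card_le_of_inequalities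
    (n : ℕ) (ι : Type) [Fintype ι] (m : ℕ) (hm : Fintype.card ι = m)
    (a : ι → EuclideanSpace ℝ (Fin n)) (b : ι → ℝ)
    (P : Set (EuclideanSpace ℝ (Fin n)))
    (hP : P = {x | (∀ j : Fin n, 0 ≤ x j) ∧ ∀ i : ι, b i ≤ (inner ℝ (a i) x : ℝ)})
    (x : EuclideanSpace ℝ (Fin n)) (hx : x ∈ Set.extremePoints ℝ P) :
    Set.ncard {j : Fin n | x j ≠ 0} ≤ m := by
  classical
  by_contra h
  push_neg at h
  set S : Finset (Fin n) := Finset.univ.filter (fun j => x j ≠ 0) with hSdef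
  have hScard : {j : Fin n | x j ≠ 0}.ncard = S.card := by
    rw [Set.ncard_eq_toFinset_card']
    congr 1
    ext j
    simp [hSdef]
  rw [hScard] at h
  -- x ∈ P and positivity on S
  obtain ⟨hxP, hxext⟩ := hx
  rw [hP] at hxP
  obtain ⟨hxpos, hxin⟩ := hxP
  have hxS : ∀ j ∈ S, 0 < x j := by
    intro j hj
    simp only [hSdef, Finset.mem_filter] at hj
    exact lt_of_le_of_ne (hxpos j) (Ne.symm hj.2)
  -- linear map with nontrivial kernel
  let f : (S → ℝ) →ₗ[ℝ] (ι → ℝ) :=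
    { toFun := fun c i => ∑ j : S, c j * a i (j : Fin n)
      map_add' := by
        intro c d; funext i
        simp [add_mul, Finset.sum_add_distrib]
      map_smul' := by
        intro r c; funext i
        simp [Finset.mul_sum, mul_assoc] }
  have hker : LinearMap.ker f ≠ ⊥ := by
    apply LinearMap.ker_ne_bot_of_finrank_lt
    simpa [hm] using h
  obtain ⟨c, hcf, hc0⟩ := Submodule.exists_mem_ne_zero_of_ne_bot hker
  have hcf : ∀ i, ∑ j : S, c j * a i (j : Fin n) = 0 := by
    intro i
    have := LinearMap.mem_ker.mp hcf
    exact congrFun this i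
  obtain ⟨j0, hj0⟩ : ∃ j0 : S, c j0 ≠ 0 := by
    by_contra hall
    push_neg at hall
    exact hc0 (funext hall)
  -- perturbation vector
  let y : EuclideanSpace ℝ (Fin n) := WithLp.toLp 2 (fun j => if h : j ∈ S then c ⟨j, h⟩ else 0)
  have hyS : ∀ j ∉ S, y j = 0 := fun j hj => dif_neg hj
  have hinner : ∀ i, (inner ℝ (a i) y : ℝ) = 0 := by
    intro i
    rw [PiLp.inner_apply]
    simp only [RCLike.inner_apply, conj_trivial]
    rw [Finset.sum_congr rfl (fun j _ => mul_comm (y j) (a i j))]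
    have : (∑ j : Fin n, a i j * y j)
        = ∑ j ∈ S, a i j * y j := by
      rw [show (∑ j : Fin n, a i j * y j)
          = ∑ j ∈ Finset.univ, a i j * y j by simp]
      exact (Finset.sum_subset (Finset.subset_univ S)
        (fun j _ hj => by rw [hyS j hj, mul_zero])).symm
    rw [this, Finset.sum_attach S (fun j => a i j * y j) |>.symm]
    have : ∀ j : S, a i (j : Fin n) * y (j : Fin n) = c j * a i (j : Fin n) := by
      intro j
      rw [show y (j : Fin n) = c j from dif_pos j.2, mul_comm]
    rw [Finset.sum_congr rfl (fun j _ => this j)]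
    exact hcf i
  -- choose epsilon
  have hSne : S.Nonempty := by
    rw [← Finset.card_pos]; omega
  set ε : ℝ := S.inf' hSne (fun j => x j / (|y j| + 1)) with hε
  have hεpos : 0 < ε := by
    rw [hε]
    apply Finset.lt_inf'_iff hSne (a := 0) |>.mpr
    intro j hj
    exact div_pos (hxS j hj) (by positivity)
  have hεle : ∀ j ∈ S, ε * |y j| ≤ x j := by
    intro j hj
    have h1 : ε ≤ x j / (|y j| + 1) := Finset.inf'_le _ hj
    have h2 : ε * (|y j| + 1) ≤ x j := by
      rw [← le_div_iff₀ (by positivity)]; exact h1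
    nlinarith [abs_nonneg (y j)]
  -- the two points
  have hmem : ∀ (s : ℝ), |s| = 1 → x + (s * ε) • y ∈ P := by
    intro s hs
    rw [hP]
    constructor
    · intro j
      by_cases hj : j ∈ S
      · have : (x + (s * ε) • y) j = x j + s * ε * y j := by
          simp [PiLp.add_apply, PiLp.smul_apply, smul_eq_mul]
        rw [this]
        have : |s * ε * y j| ≤ x j := by
          rw [abs_mul, abs_mul, hs, abs_of_pos hεpos, one_mul]
          exact hεle j hj
        have := neg_abs_le (s * ε * y j)
        linarith [(abs_le.mp ‹|s * ε * y j| ≤ x j›).1]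
      · have : (x + (s * ε) • y) j = x j + s * ε * y j := by
          simp [PiLp.add_apply, PiLp.smul_apply, smul_eq_mul]
        rw [this, hyS j hj, mul_zero, add_zero]
        exact hxpos j
    · intro i
      rw [inner_add_right, inner_smul_right, hinner i, mul_zero, add_zero]
      exact hxin i
  have h1 : x + ε • y ∈ P := by simpa using hmem 1 (by norm_num)
  have h2 : x - ε • y ∈ P := by
    have := hmem (-1) (by norm_num)
    simpa [neg_smul, sub_eq_add_neg] using this
  have hseg : x ∈ openSegment ℝ (x + ε • y) (x - ε • y) := by
    refine ⟨1/2, 1/2, by norm_num, by norm_num, by norm_num, ?_⟩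
    module
  have heq := hxext h1 h2 hseg
  have hy0 : y = 0 := by
    have : ε • y = 0 := by
      have := heq
      have h0 : x + ε • y = x + 0 := by rw [add_zero]; exact this
      exact add_left_cancel h0
    exact (smul_eq_zero.mp this).resolve_left (ne_of_gt hεpos)
  apply hj0
  have := congrFun (congrArg WithLp.ofLp hy0) (j0 : Fin n)
  rwa [show y (j0 : Fin n) = c j0 from dif_pos j0.2] at this
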